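/- Fixed projections commute with all extracted observables: let P ∈ B(H) be an orthogonal projection with R(P) = P (equivalently, T(P ⊗ 1) = P). Then for every Y ∈ B(K), [T(1 ⊗ Y), P] = 0. -/
import Mathlib


open ContinuousLinearMap

/-! The Hilbert tensor product `H ⊗ K` is modelled by a Hilbert space `L` together
with two commuting unital ⋆-homomorphisms `ι₁ : B(H) → B(L)` and `ι₂ : B(K) → B(L)`
(playing the roles of `X ↦ X ⊗ 1` and `Y ↦ 1 ⊗ Y`). Given an isometry
`V : H → L`, the quantum operation is `T(X) = V† X V` and its restriction to the
system is `R(P) = T(ι₁ P)`. -/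

variable {H K L : Type*}
  [NormedAddCommGroup H] [InnerProductSpace ℂ H] [CompleteSpace H]
  [NormedAddCommGroup K] [InnerProductSpace ℂ K] [CompleteSpace K]
  [NormedAddCommGroup L] [InnerProductSpace ℂ L] [CompleteSpace L]

/-- The quantum operation `T(X) = V† X V` in Stinespring form. -/
noncomputable def qop (V : H →L[ℂ] L) (X : L →L[ℂ] L) : H →L[ℂ] H :=
  adjoint V ∘L X ∘L V

/-- Fixed projections commute with all extracted observables: if `P` is an orthogonal
projection with `R(P) = T(P ⊗ 1) = P`, then `[T(1 ⊗ Y), P] = 0` for every `Y ∈ B(K)`. -/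
theorem fixed_projection_commutes
    (ι₁ : (H →L[ℂ] H) →⋆ₐ[ℂ] (L →L[ℂ] L)) (ι₂ : (K →L[ℂ] K) →⋆ₐ[ℂ] (L →L[ℂ] L))
    (hcomm : ∀ X Y, ι₁ X * ι₂ Y = ι₂ Y * ι₁ X)
    (V : H →L[ℂ] L) (hV : adjoint V ∘L V = 1)
    (P : H →L[ℂ] H) (hPproj : IsIdempotentElem P) (hPsa : IsSelfAdjoint P)
    (hfix : qop V (ι₁ P) = P) :
    ∀ Y : K →L[ℂ] K, qop V (ι₂ Y) ∘L P - P ∘L qop V (ι₂ Y) = 0 := by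
  intro Y
  have hAsa : adjoint (ι₁ P) = ι₁ P := isSelfAdjoint_iff'.mp (hPsa.map ι₁)
  have hPsa' : adjoint P = P := hPsa.star_eq
  have hAidem : ι₁ P ∘L ι₁ P = ι₁ P := by
    rw [← mul_def, ← map_mul, hPproj.eq]
  have hPidem : P ∘L P = P := hPproj.eq
  have hfix2 : (adjoint V ∘L ι₁ P) ∘L V = P := hfix
  have hfix' : adjoint V ∘L (ι₁ P ∘L V) = P := by
    rw [← comp_assoc]; exact hfix2
  -- key : ι₁ P ∘L V = V ∘L P
  have hkey : ι₁ P ∘L V = V ∘L P := by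
    have hS : adjoint (ι₁ P ∘L V - V ∘L P) ∘L (ι₁ P ∘L V - V ∘L P) = 0 := by
      rw [map_sub]
      simp only [adjoint_comp, hAsa, hPsa', sub_comp, comp_sub]
      have t1 : (adjoint V ∘L ι₁ P) ∘L (ι₁ P ∘L V) = P := by
        rw [comp_assoc, ← comp_assoc (ι₁ P), hAidem, hfix']
      have t2 : (adjoint V ∘L ι₁ P) ∘L (V ∘L P) = P := by
        rw [← comp_assoc, hfix2, hPidem]
      have t3 : (P ∘L adjoint V) ∘L (ι₁ P ∘L V) = P := by
        rw [comp_assoc, hfix', hPidem]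
      have t4 : (P ∘L adjoint V) ∘L (V ∘L P) = P := by
        rw [comp_assoc, ← comp_assoc (adjoint V), hV, one_def, id_comp, hPidem]
      rw [t1, t2, t3, t4]; abel
    have hnorm : ‖ι₁ P ∘L V - V ∘L P‖ * ‖ι₁ P ∘L V - V ∘L P‖ = 0 := by
      rw [← norm_adjoint_comp_self, hS, norm_zero]
    exact sub_eq_zero.mp (norm_eq_zero.mp (mul_self_eq_zero.mp hnorm))
  have hkey' : adjoint V ∘L ι₁ P = P ∘L adjoint V := by
    have := congrArg ContinuousLinearMap.adjoint hkey
    simpa [adjoint_comp, hAsa, hPsa'] using this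
  have hYcomm : ι₂ Y ∘L ι₁ P = ι₁ P ∘L ι₂ Y := by
    rw [← mul_def, ← mul_def, ← hcomm]
  have main : ((adjoint V ∘L ι₂ Y) ∘L V) ∘L P = P ∘L ((adjoint V ∘L ι₂ Y) ∘L V) := by
    calc ((adjoint V ∘L ι₂ Y) ∘L V) ∘L P
        = (adjoint V ∘L ι₂ Y) ∘L (V ∘L P) := by rw [comp_assoc]
      _ = (adjoint V ∘L ι₂ Y) ∘L (ι₁ P ∘L V) := by rw [hkey]
      _ = adjoint V ∘L ((ι₂ Y ∘L ι₁ P) ∘L V) := by rw [comp_assoc, comp_assoc]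
      _ = adjoint V ∘L ((ι₁ P ∘L ι₂ Y) ∘L V) := by rw [hYcomm]
      _ = (adjoint V ∘L ι₁ P) ∘L (ι₂ Y ∘L V) := by rw [comp_assoc, comp_assoc]
      _ = (P ∘L adjoint V) ∘L (ι₂ Y ∘L V) := by rw [hkey']
      _ = P ∘L ((adjoint V ∘L ι₂ Y) ∘L V) := by rw [comp_assoc, comp_assoc]
  show ((adjoint V ∘L ι₂ Y) ∘L V) ∘L P - P ∘L ((adjoint V ∘L ι₂ Y) ∘L V) = 0
  rw [main, sub_self]
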